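/- arXiv:2302.09714 — 3 statements merged into one kernel-verified Lean document; each statement's English description precedes it below -/
import Mathlib

section
/- Let E(t,u) and F(t,u) be smooth non-negative functions on [δ,t*]×[0,u*]. Suppose there exist positive constants A, B, C such that for all (t,u) in [δ,t*]×[0,u*], E(t,u) + F(t,u) ≤ A t² + B ∫₀ᵘ F(t,u') du' + C ∫_δ^t E(t',u)/t' dt'. If e^{B u*} C ≤ 1, then for all (t,u) in [δ,t*]×[0,u*], E(t,u) + F(t,u) ≤ 3 A e^{B u} t². -/
/-- Refined Gronwall-type inequality in two variables (Lemma on `refined Gronwall`). -/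
theorem refined_gronwall
    (δ tstar ustar A B C : ℝ)
    (hδ : 0 < δ) (hts : δ ≤ tstar) (hus : 0 ≤ ustar)
    (hA : 0 < A) (hB : 0 < B) (hC : 0 < C)
    (E F : ℝ → ℝ → ℝ)
    (hEcont : ContinuousOn (fun p : ℝ × ℝ => E p.1 p.2) (Set.Icc δ tstar ×ˢ Set.Icc 0 ustar))
    (hFcont : ContinuousOn (fun p : ℝ × ℝ => F p.1 p.2) (Set.Icc δ tstar ×ˢ Set.Icc 0 ustar))
    (hEnn : ∀ t ∈ Set.Icc δ tstar, ∀ u ∈ Set.Icc 0 ustar, 0 ≤ E t u)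
    (hFnn : ∀ t ∈ Set.Icc δ tstar, ∀ u ∈ Set.Icc 0 ustar, 0 ≤ F t u)
    (hmain : ∀ t ∈ Set.Icc δ tstar, ∀ u ∈ Set.Icc 0 ustar,
      E t u + F t u ≤ A * t ^ 2 + B * (∫ u' in (0:ℝ)..u, F t u')
        + C * (∫ t' in δ..t, E t' u / t'))
    (hcond : Real.exp (B * ustar) * C ≤ 1) :
    ∀ t ∈ Set.Icc δ tstar, ∀ u ∈ Set.Icc 0 ustar,
      E t u + F t u ≤ 3 * A * Real.exp (B * u) * t ^ 2 := by
  set K : Set (ℝ × ℝ) := Set.Icc δ tstar ×ˢ Set.Icc 0 ustar with hK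
  have hKne : K.Nonempty := ⟨(δ, 0), ⟨⟨le_refl δ, hts⟩, ⟨le_refl 0, hus⟩⟩⟩
  have hKc : IsCompact K := isCompact_Icc.prod isCompact_Icc
  set d : ℝ × ℝ → ℝ := fun p => 3 * A * Real.exp (B * p.2) * p.1 ^ 2 with hd
  have hdpos : ∀ p ∈ K, 0 < d p := by
    intro p hp
    have ht : 0 < p.1 := lt_of_lt_of_le hδ hp.1.1
    positivity
  set g : ℝ × ℝ → ℝ := fun p => (E p.1 p.2 + F p.1 p.2) / d p with hg
  have hgcont : ContinuousOn g K := by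
    apply (hEcont.add hFcont).div
    · exact ((continuous_const.mul (Real.continuous_exp.comp
        (continuous_const.mul continuous_snd))).mul (continuous_fst.pow 2)).continuousOn
    · intro p hp; exact (hdpos p hp).ne'
  obtain ⟨p₀, hp₀K, hmax⟩ := hKc.exists_isMaxOn hKne hgcont
  set S : ℝ := g p₀ with hS
  obtain ⟨t₀, u₀⟩ := p₀
  have ht₀ : t₀ ∈ Set.Icc δ tstar := hp₀K.1
  have hu₀ : u₀ ∈ Set.Icc 0 ustar := hp₀K.2
  have ht₀pos : 0 < t₀ := lt_of_lt_of_le hδ ht₀.1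
  have hSnn : 0 ≤ S := by
    apply div_nonneg
    · exact add_nonneg (hEnn _ ht₀ _ hu₀) (hFnn _ ht₀ _ hu₀)
    · exact (hdpos _ hp₀K).le
  have hbound : ∀ p ∈ K, E p.1 p.2 + F p.1 p.2 ≤ S * d p := by
    intro p hp
    have h1 : g p ≤ S := hmax hp
    have h2 : 0 < d p := hdpos p hp
    calc E p.1 p.2 + F p.1 p.2 = g p * d p := by
          exact (div_mul_cancel₀ (E p.1 p.2 + F p.1 p.2) h2.ne').symm
      _ ≤ S * d p := by
          exact mul_le_mul_of_nonneg_right h1 h2.le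
  -- key step: S ≤ 1
  have hSle : S ≤ 1 := by
    have hEF₀ : E t₀ u₀ + F t₀ u₀ = S * d (t₀, u₀) := by
      have h2 : 0 < d (t₀, u₀) := hdpos _ hp₀K
      exact (div_mul_cancel₀ (E t₀ u₀ + F t₀ u₀) h2.ne').symm
    -- bound the F-integral
    have hFint : IntervalIntegrable (fun u' => F t₀ u') MeasureTheory.volume 0 u₀ := by
      apply ContinuousOn.intervalIntegrable
      have : ContinuousOn (fun u' : ℝ => F t₀ u') (Set.Icc 0 ustar) := by
        have hcmp : Set.MapsTo (fun u' : ℝ => (t₀, u')) (Set.Icc 0 ustar) K := by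
          intro x hx; exact ⟨ht₀, hx⟩
        exact hFcont.comp ((continuous_const.prodMk continuous_id).continuousOn) hcmp
      apply this.mono
      rw [Set.uIcc_of_le hu₀.1]
      exact Set.Icc_subset_Icc le_rfl hu₀.2
    have hFI : B * (∫ u' in (0:ℝ)..u₀, F t₀ u') ≤ 3 * S * A * t₀ ^ 2 * (Real.exp (B * u₀) - 1) := by
      have hmono : (∫ u' in (0:ℝ)..u₀, F t₀ u')
          ≤ ∫ u' in (0:ℝ)..u₀, S * (3 * A * Real.exp (B * u') * t₀ ^ 2) := by
        apply intervalIntegral.integral_mono_on hu₀.1 hFint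
        · exact (continuous_const.mul ((continuous_const.mul (Real.continuous_exp.comp
            (continuous_const.mul continuous_id))).mul continuous_const)).intervalIntegrable 0 u₀
        · intro x hx
          have hxK : ((t₀, x) : ℝ × ℝ) ∈ K := ⟨ht₀, ⟨hx.1, hx.2.trans hu₀.2⟩⟩
          have := hbound (t₀, x) hxK
          have hEx := hEnn t₀ ht₀ x ⟨hx.1, hx.2.trans hu₀.2⟩
          simp only [hd] at this
          linarith
      have hcalc : (∫ u' in (0:ℝ)..u₀, S * (3 * A * Real.exp (B * u') * t₀ ^ 2))
          = S * 3 * A * t₀ ^ 2 * ((Real.exp (B * u₀) - 1) / B) := by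
        rw [intervalIntegral.integral_const_mul]
        have : (∫ u' in (0:ℝ)..u₀, 3 * A * Real.exp (B * u') * t₀ ^ 2)
            = 3 * A * t₀ ^ 2 * ∫ u' in (0:ℝ)..u₀, Real.exp (B * u') := by
          rw [← intervalIntegral.integral_const_mul]
          congr 1; ext u'; ring
        rw [this]
        have hexp : (∫ u' in (0:ℝ)..u₀, Real.exp (B * u')) = (Real.exp (B * u₀) - 1) / B := by
          rw [intervalIntegral.integral_comp_mul_left (fun x => Real.exp x) hB.ne']
          simp [mul_comm]
          ring
        rw [hexp]; ring
      rw [hcalc] at hmono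
      have hBpos := hB
      calc B * (∫ u' in (0:ℝ)..u₀, F t₀ u')
          ≤ B * (S * 3 * A * t₀ ^ 2 * ((Real.exp (B * u₀) - 1) / B)) :=
            mul_le_mul_of_nonneg_left hmono hB.le
        _ = 3 * S * A * t₀ ^ 2 * (Real.exp (B * u₀) - 1) := by
            rw [mul_comm B, mul_assoc, div_mul_cancel₀ _ hB.ne']
            ring
    -- bound the E-integral
    have hEint : IntervalIntegrable (fun t' => E t' u₀ / t') MeasureTheory.volume δ t₀ := by
      apply ContinuousOn.intervalIntegrable
      have hE1 : ContinuousOn (fun t' : ℝ => E t' u₀) (Set.Icc δ tstar) := by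
        have hcmp : Set.MapsTo (fun t' : ℝ => (t', u₀)) (Set.Icc δ tstar) K := by
          intro x hx; exact ⟨hx, hu₀⟩
        exact hEcont.comp ((continuous_id.prodMk continuous_const).continuousOn) hcmp
      have : ContinuousOn (fun t' : ℝ => E t' u₀ / t') (Set.Icc δ tstar) := by
        apply hE1.div continuousOn_id
        intro x hx; exact (lt_of_lt_of_le hδ hx.1).ne'
      apply this.mono
      rw [Set.uIcc_of_le ht₀.1]
      exact Set.Icc_subset_Icc le_rfl ht₀.2
    have hEI : C * (∫ t' in δ..t₀, E t' u₀ / t') ≤ (3 / 2) * S * A * t₀ ^ 2 := by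
      have hmono : (∫ t' in δ..t₀, E t' u₀ / t')
          ≤ ∫ t' in δ..t₀, S * (3 * A * Real.exp (B * u₀)) * t' := by
        apply intervalIntegral.integral_mono_on ht₀.1 hEint
        · exact (continuous_const.mul continuous_id).intervalIntegrable δ t₀
        · intro x hx
          have hxpos : 0 < x := lt_of_lt_of_le hδ hx.1
          have hxK : ((x, u₀) : ℝ × ℝ) ∈ K := ⟨⟨hx.1, hx.2.trans ht₀.2⟩, hu₀⟩
          have hb := hbound (x, u₀) hxK
          have hFx := hFnn x ⟨hx.1, hx.2.trans ht₀.2⟩ u₀ hu₀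
          simp only [hd] at hb
          rw [div_le_iff₀ hxpos]
          have hrw : S * (3 * A * Real.exp (B * u₀)) * x * x
              = S * (3 * A * Real.exp (B * u₀) * x ^ 2) := by ring
          linarith [hrw.ge, hrw.le, hb, hFx]
      have hcalc : (∫ t' in δ..t₀, S * (3 * A * Real.exp (B * u₀)) * t')
          = S * (3 * A * Real.exp (B * u₀)) * ((t₀ ^ 2 - δ ^ 2) / 2) := by
        rw [intervalIntegral.integral_const_mul]
        simp [integral_id]
      rw [hcalc] at hmono
      have hCe : C * Real.exp (B * u₀) ≤ 1 := by
        have h1 : Real.exp (B * u₀) ≤ Real.exp (B * ustar) :=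
          Real.exp_le_exp.mpr (mul_le_mul_of_nonneg_left hu₀.2 hB.le)
        nlinarith [Real.exp_pos (B * u₀)]
      have hδsq : 0 ≤ δ ^ 2 := sq_nonneg δ
      have hepos := Real.exp_pos (B * u₀)
      calc C * (∫ t' in δ..t₀, E t' u₀ / t')
          ≤ C * (S * (3 * A * Real.exp (B * u₀)) * ((t₀ ^ 2 - δ ^ 2) / 2)) :=
            mul_le_mul_of_nonneg_left hmono hC.le
        _ ≤ C * (S * (3 * A * Real.exp (B * u₀)) * (t₀ ^ 2 / 2)) := by
            apply mul_le_mul_of_nonneg_left _ hC.le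
            apply mul_le_mul_of_nonneg_left _ (by positivity)
            linarith
        _ = (3 / 2) * S * A * t₀ ^ 2 * (C * Real.exp (B * u₀)) := by ring
        _ ≤ (3 / 2) * S * A * t₀ ^ 2 := by
            apply mul_le_of_le_one_right _ hCe
            positivity
    have hmain₀ := hmain t₀ ht₀ u₀ hu₀
    rw [hEF₀] at hmain₀
    simp only [hd] at hmain₀
    have hkey : S * (3 * A * Real.exp (B * u₀) * t₀ ^ 2)
        ≤ A * t₀ ^ 2 + 3 * S * A * t₀ ^ 2 * (Real.exp (B * u₀) - 1) + (3 / 2) * S * A * t₀ ^ 2 := by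
      linarith
    have ht₀sq : 0 < t₀ ^ 2 := by positivity
    have hring : S * (3 * A * Real.exp (B * u₀) * t₀ ^ 2)
        - (A * t₀ ^ 2 + 3 * S * A * t₀ ^ 2 * (Real.exp (B * u₀) - 1)
          + (3 / 2) * S * A * t₀ ^ 2)
        = (3 / 2) * S * (A * t₀ ^ 2) - A * t₀ ^ 2 := by ring
    have h2 : (3 / 2) * S * (A * t₀ ^ 2) ≤ A * t₀ ^ 2 := by linarith
    nlinarith [mul_pos hA ht₀sq]
  -- conclude
  intro t ht u hu
  have hpK : ((t, u) : ℝ × ℝ) ∈ K := ⟨ht, hu⟩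
  have hb := hbound (t, u) hpK
  simp only [hd] at hb
  have hdp : 0 ≤ 3 * A * Real.exp (B * u) * t ^ 2 := (hdpos (t, u) hpK).le
  calc E t u + F t u ≤ S * (3 * A * Real.exp (B * u) * t ^ 2) := hb
    _ ≤ 1 * (3 * A * Real.exp (B * u) * t ^ 2) := mul_le_mul_of_nonneg_right hSle hdp
    _ = 3 * A * Real.exp (B * u) * t ^ 2 := one_mul _
end

section
/- Let F and G be non-negative continuous functions on [δ, t*] with δ > 0, and let F₀ ≥ 0 be a constant. If for all t ∈ [δ, t*], F(t) ≤ F₀/t + (1/t)∫_δ^t F(τ) dτ + G(t), then for all t ∈ [δ, t*], F(t) ≤ F₀/δ + ∫_δ^t G(τ)/τ dτ + G(t). -/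
open MeasureTheory Set intervalIntegral

/-- Gronwall-type inequality with singular weight 1/t. -/
theorem gronwall_singular
    (δ tstar F₀ : ℝ) (hδ : 0 < δ) (hts : δ ≤ tstar) (hF₀ : 0 ≤ F₀)
    (F G : ℝ → ℝ)
    (hFcont : ContinuousOn F (Set.Icc δ tstar))
    (hGcont : ContinuousOn G (Set.Icc δ tstar))
    (hFnn : ∀ t ∈ Set.Icc δ tstar, 0 ≤ F t)
    (hGnn : ∀ t ∈ Set.Icc δ tstar, 0 ≤ G t)
    (hmain : ∀ t ∈ Set.Icc δ tstar,
      F t ≤ F₀ / t + (1 / t) * (∫ τ in δ..t, F τ) + G t) :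
    ∀ t ∈ Set.Icc δ tstar,
      F t ≤ F₀ / δ + (∫ τ in δ..t, G τ / τ) + G t := by
  set G' : ℝ → ℝ := fun τ => G τ / τ with hG'
  set H : ℝ → ℝ := fun u => ∫ τ in δ..u, F τ with hHdef
  set J : ℝ → ℝ := fun u => ∫ τ in δ..u, G' τ with hJdef
  set φ : ℝ → ℝ := fun u => H u / u + F₀ / u - J u with hφdef
  have hne : ∀ x ∈ Set.Icc δ tstar, x ≠ 0 := fun x hx =>
    ne_of_gt (lt_of_lt_of_le hδ hx.1)
  have hG'cont : ContinuousOn G' (Set.Icc δ tstar) :=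
    hGcont.div continuousOn_id hne
  have hFint : ∀ u ∈ Set.Icc δ tstar, IntervalIntegrable F volume δ u := by
    intro u hu
    apply ContinuousOn.intervalIntegrable
    exact hFcont.mono (by rw [Set.uIcc_of_le hu.1]; exact Set.Icc_subset_Icc le_rfl hu.2)
  have hGint : ∀ u ∈ Set.Icc δ tstar, IntervalIntegrable G' volume δ u := by
    intro u hu
    apply ContinuousOn.intervalIntegrable
    exact hG'cont.mono (by rw [Set.uIcc_of_le hu.1]; exact Set.Icc_subset_Icc le_rfl hu.2)
  have hIccuIcc : Set.Icc δ tstar = Set.uIcc δ tstar := (Set.uIcc_of_le hts).symm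
  have hHcont : ContinuousOn H (Set.Icc δ tstar) := by
    rw [hIccuIcc]
    exact intervalIntegral.continuousOn_primitive_interval
      ((hFcont.mono hIccuIcc.symm.subset).integrableOn_compact isCompact_uIcc)
  have hJcont : ContinuousOn J (Set.Icc δ tstar) := by
    rw [hIccuIcc]
    exact intervalIntegral.continuousOn_primitive_interval
      ((hG'cont.mono hIccuIcc.symm.subset).integrableOn_compact isCompact_uIcc)
  have hφcont : ContinuousOn φ (Set.Icc δ tstar) :=
    ((hHcont.div continuousOn_id hne).add
      (continuousOn_const.div continuousOn_id hne)).sub hJcont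
  have hderiv : ∀ x ∈ Set.Ioo δ tstar,
      HasDerivAt φ ((F x * x - H x * 1) / x ^ 2 + (0 * x - F₀ * 1) / x ^ 2 - G' x) x := by
    intro x hx
    have hxI : x ∈ Set.Icc δ tstar := Set.Ioo_subset_Icc_self hx
    have hx0 : (0:ℝ) < x := lt_of_lt_of_le hδ hxI.1
    have hopen : IsOpen (Set.Ioo δ tstar) := isOpen_Ioo
    have hFmeas := (hFcont.mono Set.Ioo_subset_Icc_self).stronglyMeasurableAtFilter
      hopen (μ := MeasureTheory.volume) x hx
    have hGmeas := (hG'cont.mono Set.Ioo_subset_Icc_self).stronglyMeasurableAtFilter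
      hopen (μ := MeasureTheory.volume) x hx
    have hFat : ContinuousAt F x :=
      (hFcont x hxI).continuousAt (Icc_mem_nhds hx.1 hx.2)
    have hGat : ContinuousAt G' x :=
      (hG'cont x hxI).continuousAt (Icc_mem_nhds hx.1 hx.2)
    have hHd : HasDerivAt H (F x) x :=
      intervalIntegral.integral_hasDerivAt_right (hFint x hxI) hFmeas hFat
    have hJd : HasDerivAt J (G' x) x :=
      intervalIntegral.integral_hasDerivAt_right (hGint x hxI) hGmeas hGat
    exact ((hHd.div (hasDerivAt_id x) (ne_of_gt hx0)).add
      ((hasDerivAt_const x F₀).div (hasDerivAt_id x) (ne_of_gt hx0))).sub hJd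
  have hφderiv_nonpos : ∀ x ∈ Set.Ioo δ tstar, deriv φ x ≤ 0 := by
    intro x hx
    have hxI : x ∈ Set.Icc δ tstar := Set.Ioo_subset_Icc_self hx
    have hx0 : (0:ℝ) < x := lt_of_lt_of_le hδ hxI.1
    have hx2 : (0:ℝ) < x ^ 2 := by positivity
    have hmx : x * F x ≤ F₀ + H x + x * G x := by
      have h : F x ≤ F₀ / x + 1 / x * H x + G x := hmain x hxI
      have h2 := mul_le_mul_of_nonneg_left h hx0.le
      calc x * F x ≤ x * (F₀ / x + 1 / x * H x + G x) := h2
        _ = F₀ + H x + x * G x := by field_simp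
    have key : (F x * x - H x * 1 + (0 * x - F₀ * 1)) / x ^ 2 ≤ G x / x := by
      rw [div_le_div_iff₀ hx2 hx0]
      nlinarith [mul_le_mul_of_nonneg_right
        (show x * F x - H x - F₀ ≤ x * G x by linarith) hx0.le]
    rw [(hderiv x hx).deriv, ← add_div, sub_nonpos]
    exact key
  have hanti : AntitoneOn φ (Set.Icc δ tstar) := by
    apply antitoneOn_of_deriv_nonpos (convex_Icc δ tstar) hφcont
    · rw [interior_Icc]
      exact fun x hx => (hderiv x hx).differentiableAt.differentiableWithinAt
    · rw [interior_Icc]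
      exact hφderiv_nonpos
  intro t ht
  have ht0 : (0:ℝ) < t := lt_of_lt_of_le hδ ht.1
  have hφle : φ t ≤ φ δ := hanti ⟨le_rfl, hts⟩ ht ht.1
  have hφδ : φ δ = F₀ / δ := by
    simp [hφdef, hHdef, hJdef, intervalIntegral.integral_same]
  have hφt : H t / t + F₀ / t - J t ≤ F₀ / δ := by rw [hφδ] at hφle; exact hφle
  have h : F t ≤ F₀ / t + 1 / t * H t + G t := hmain t ht
  have hH : 1 / t * H t = H t / t := by ring
  show F t ≤ F₀ / δ + J t + G t
  rw [hH] at h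
  linarith
end

section
/- Let χ : [δ,t*] → ℝ be C¹ and satisfy |χ'(t) − e(t)χ(t) + χ(t)²| ≤ Kε for all t, where |e(t)| ≤ Cε, and |χ(δ)| ≤ C₁ε. Suppose additionally that |χ(t)| ≤ 1 on [δ,t*] and t* ≤ 1. Then there is a constant C₂ depending only on K, C, C₁ such that |χ(t)| ≤ C₂ε for all t ∈ [δ,t*], provided ε is sufficiently small. -/
open Set Real

/-- Riccati-type a priori estimate for the null second fundamental form `χ`:
the transport inequality `|χ' − eχ + χ²| ≤ Kε` with `|e| ≤ Cε`, small data
`|χ(δ)| ≤ C₁ε`, and the a priori bound `|χ| ≤ 1` yield `|χ| ≤ C₂ε`, for ε small. -/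
theorem riccati_chi_bound
    (K C C₁ : ℝ) (hK : 0 < K) (hC : 0 < C) (hC₁ : 0 < C₁) :
    ∃ C₂ > 0, ∃ ε₀ > 0, ∀ ε : ℝ, 0 < ε → ε ≤ ε₀ →
      ∀ δ tstar : ℝ, 0 < δ → δ ≤ tstar → tstar ≤ 1 →
      ∀ χ χ' e : ℝ → ℝ,
        (∀ t ∈ Set.Icc δ tstar, HasDerivAt χ (χ' t) t) →
        ContinuousOn χ' (Set.Icc δ tstar) →
        (∀ t ∈ Set.Icc δ tstar, |χ' t - e t * χ t + (χ t) ^ 2| ≤ K * ε) →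
        (∀ t ∈ Set.Icc δ tstar, |e t| ≤ C * ε) →
        |χ δ| ≤ C₁ * ε →
        (∀ t ∈ Set.Icc δ tstar, |χ t| ≤ 1) →
        ∀ t ∈ Set.Icc δ tstar, |χ t| ≤ C₂ * ε := by
  refine ⟨(C₁ + K) * Real.exp (C + 1), by positivity, 1, one_pos, ?_⟩
  intro ε hε hε1 δ tstar hδ hδt ht1 χ χ' e hderiv hcont hric he hδ0 hap t ht
  have hC1pos : (0:ℝ) < C + 1 := by linarith
  -- Gronwall
  have hf : ContinuousOn χ (Icc δ tstar) := fun x hx => (hderiv x hx).continuousAt.continuousWithinAt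
  have hf' : ∀ x ∈ Ico δ tstar, HasDerivWithinAt χ (χ' x) (Ici x) x :=
    fun x hx => (hderiv x (Ico_subset_Icc_self hx)).hasDerivWithinAt
  have bound : ∀ x ∈ Ico δ tstar, ‖χ' x‖ ≤ (C + 1) * ‖χ x‖ + K * ε := by
    intro x hx
    have hx' : x ∈ Icc δ tstar := Ico_subset_Icc_self hx
    have h1 := hric x hx'
    have h2 := he x hx'
    have h3 := hap x hx'
    have habs : |χ' x| ≤ |χ' x - e x * χ x + (χ x)^2| + |e x| * |χ x| + |χ x|^2 := by
      have : χ' x = (χ' x - e x * χ x + (χ x)^2) + e x * χ x - (χ x)^2 := by ring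
      calc |χ' x| = |(χ' x - e x * χ x + (χ x)^2) + e x * χ x - (χ x)^2| := by rw [← this]
        _ ≤ |(χ' x - e x * χ x + (χ x)^2) + e x * χ x| + |(χ x)^2| := abs_sub _ _
        _ ≤ |χ' x - e x * χ x + (χ x)^2| + |e x * χ x| + |(χ x)^2| := by
            gcongr; exact abs_add_le _ _
        _ = |χ' x - e x * χ x + (χ x)^2| + |e x| * |χ x| + |χ x|^2 := by
            rw [abs_mul, abs_pow]
    have hχnn : (0:ℝ) ≤ |χ x| := abs_nonneg _
    have : |χ' x| ≤ K * ε + C * ε * |χ x| + |χ x| * |χ x| := by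
      have hsq : |χ x|^2 ≤ |χ x| * |χ x| := by rw [sq]
      nlinarith [abs_nonneg (e x)]
    have hCe : C * ε ≤ C := by nlinarith
    calc ‖χ' x‖ = |χ' x| := rfl
      _ ≤ K * ε + C * ε * |χ x| + |χ x| * |χ x| := this
      _ ≤ K * ε + C * |χ x| + 1 * |χ x| := by nlinarith
      _ = (C + 1) * ‖χ x‖ + K * ε := by simp [Real.norm_eq_abs]; ring
  have hg := norm_le_gronwallBound_of_norm_deriv_right_le hf hf' (by simpa using hδ0) bound t ht
  have hne : (C + 1) ≠ 0 := ne_of_gt hC1pos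
  rw [gronwallBound_of_K_ne_0 hne] at hg
  have hx1 : t - δ ≤ 1 := by
    have := ht.2; linarith
  have hx0 : 0 ≤ t - δ := by have := ht.1; linarith
  have hexp : Real.exp ((C + 1) * (t - δ)) ≤ Real.exp (C + 1) := by
    apply Real.exp_le_exp.2; nlinarith
  have hexp0 : (0:ℝ) < Real.exp ((C + 1) * (t - δ)) := Real.exp_pos _
  have hdiv : K * ε / (C + 1) ≤ K * ε := by
    rw [div_le_iff₀ hC1pos]; nlinarith [mul_pos hK hε]
  calc |χ t| = ‖χ t‖ := rfl
    _ ≤ C₁ * ε * Real.exp ((C + 1) * (t - δ)) + K * ε / (C + 1) * (Real.exp ((C + 1) * (t - δ)) - 1) := hg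
    _ ≤ C₁ * ε * Real.exp (C + 1) + K * ε * Real.exp (C + 1) := by
        have h1 : C₁ * ε * Real.exp ((C + 1) * (t - δ)) ≤ C₁ * ε * Real.exp (C + 1) := by
          apply mul_le_mul_of_nonneg_left hexp (by positivity)
        have h2 : K * ε / (C + 1) * (Real.exp ((C + 1) * (t - δ)) - 1) ≤ K * ε * Real.exp (C + 1) := by
          have hnn : (0:ℝ) ≤ K * ε / (C + 1) := by positivity
          calc K * ε / (C + 1) * (Real.exp ((C + 1) * (t - δ)) - 1)
              ≤ K * ε / (C + 1) * Real.exp (C + 1) := by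
                apply mul_le_mul_of_nonneg_left _ hnn; linarith
            _ ≤ K * ε * Real.exp (C + 1) := by
                apply mul_le_mul_of_nonneg_right hdiv (Real.exp_pos _).le
        linarith
    _ = (C₁ + K) * Real.exp (C + 1) * ε := by ring
end
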